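/- Let a lattice tetrahedron in ℤ³ with vertices e₁, e₂, e₃, (x,y,z), where x,y,z ≥ 1, contain no non-vertex lattice points, and let d = x+y+z-1. Then ⌈κx/d⌉ + ⌈κy/d⌉ + ⌈κz/d⌉ = κ + 2 for all κ ∈ {1,...,d-1}, and gcd(x,d) = gcd(y,d) = gcd(z,d) = 1. -/

import Mathlib

noncomputable def toR (x : Fin 3 → ℤ) : Fin 3 → ℝ := fun i => (x i : ℝ)

lemma key_lower
    (x y z : ℤ) (hx : 1 ≤ x) (hy : 1 ≤ y) (hz : 1 ≤ z)
    (hfree : ∀ p : Fin 3 → ℤ,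
      toR p ∈ convexHull ℝ
        ({toR ![1, 0, 0], toR ![0, 1, 0], toR ![0, 0, 1], toR ![x, y, z]} :
          Set (Fin 3 → ℝ)) →
      p = ![1, 0, 0] ∨ p = ![0, 1, 0] ∨ p = ![0, 0, 1] ∨ p = ![x, y, z])
    (d : ℤ) (hd : d = x + y + z - 1)
    (κ : ℤ) (h1 : 1 ≤ κ) (h2 : κ ≤ d - 1) :
    κ + 2 ≤ ⌈((κ * x : ℤ) : ℚ) / (d : ℚ)⌉ + ⌈((κ * y : ℤ) : ℚ) / (d : ℚ)⌉ +
        ⌈((κ * z : ℤ) : ℚ) / (d : ℚ)⌉ := by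
  have hd2 : (2:ℤ) ≤ d := by omega
  have hdQ : (0:ℚ) < (d:ℚ) := by exact_mod_cast (by omega : (0:ℤ) < d)
  set a := ⌈((κ * x : ℤ) : ℚ) / (d : ℚ)⌉ with ha_def
  set b := ⌈((κ * y : ℤ) : ℚ) / (d : ℚ)⌉ with hb_def
  set c := ⌈((κ * z : ℤ) : ℚ) / (d : ℚ)⌉ with hc_def
  have ha : ((κ * x : ℤ) : ℚ) / (d : ℚ) ≤ (a : ℚ) := Int.le_ceil _
  have hb : ((κ * y : ℤ) : ℚ) / (d : ℚ) ≤ (b : ℚ) := Int.le_ceil _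
  have hc : ((κ * z : ℤ) : ℚ) / (d : ℚ) ≤ (c : ℚ) := Int.le_ceil _
  -- lower bound a+b+c ≥ κ+1
  have hlow : κ + 1 ≤ a + b + c := by
    have hsum : (κ : ℚ) + (κ : ℚ)/(d:ℚ) ≤ ((a+b+c : ℤ) : ℚ) := by
      have e : ((κ*x:ℤ):ℚ)/(d:ℚ) + ((κ*y:ℤ):ℚ)/(d:ℚ) + ((κ*z:ℤ):ℚ)/(d:ℚ)
          = (κ:ℚ) + (κ:ℚ)/(d:ℚ) := by
        have hdd : ((x:ℚ) + y + z) = (d:ℚ) + 1 := by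
          have : (x + y + z : ℤ) = d + 1 := by omega
          exact_mod_cast this
        field_simp
        push_cast; linear_combination (κ:ℚ) * hdd
      push_cast
      rw [← e]; push_cast at ha hb hc ⊢; linarith
    have hq : (κ : ℚ) < ((a+b+c : ℤ) : ℚ) := by
      have : (0:ℚ) < (κ:ℚ)/(d:ℚ) := by
        apply div_pos _ hdQ; exact_mod_cast (by omega : (0:ℤ) < κ)
      linarith
    have : κ < a + b + c := by exact_mod_cast hq
    omega
  by_contra hcon
  have hsum : a + b + c = κ + 1 := by omega
  -- build the lattice point and weights
  set p : Fin 3 → ℤ := ![a, b, c] with hp_def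
  set w : Fin 4 → ℝ := ![(a:ℝ) - (κ:ℝ)*(x:ℝ)/(d:ℝ), (b:ℝ) - (κ:ℝ)*(y:ℝ)/(d:ℝ),
      (c:ℝ) - (κ:ℝ)*(z:ℝ)/(d:ℝ), (κ:ℝ)/(d:ℝ)] with hw_def
  set v4 : Fin 4 → (Fin 3 → ℝ) := ![toR ![1,0,0], toR ![0,1,0], toR ![0,0,1], toR ![x,y,z]]
    with hv4_def
  have hdR : (0:ℝ) < (d:ℝ) := by exact_mod_cast (by omega : (0:ℤ) < d)
  have haR : (κ:ℝ)*(x:ℝ)/(d:ℝ) ≤ (a:ℝ) := by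
    have := ha; rw [div_le_iff₀ hdQ] at this; rw [div_le_iff₀ hdR]
    push_cast at this ⊢; exact_mod_cast this
  have hbR : (κ:ℝ)*(y:ℝ)/(d:ℝ) ≤ (b:ℝ) := by
    have := hb; rw [div_le_iff₀ hdQ] at this; rw [div_le_iff₀ hdR]
    push_cast at this ⊢; exact_mod_cast this
  have hcR : (κ:ℝ)*(z:ℝ)/(d:ℝ) ≤ (c:ℝ) := by
    have := hc; rw [div_le_iff₀ hdQ] at this; rw [div_le_iff₀ hdR]
    push_cast at this ⊢; exact_mod_cast this
  have hw0 : ∀ i ∈ (Finset.univ : Finset (Fin 4)), 0 ≤ w i := by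
    intro i _
    fin_cases i <;> simp [hw_def] <;>
      [linarith; linarith; linarith;
       positivity]
  have hws : ∑ i : Fin 4, w i = 1 := by
    rw [Fin.sum_univ_four]
    simp only [hw_def, Matrix.cons_val_zero, Matrix.cons_val_one, Matrix.head_cons,
      Matrix.cons_val_two, Matrix.tail_cons, Matrix.cons_val_three]
    have hsR : (a:ℝ) + b + c = (κ:ℝ) + 1 := by exact_mod_cast congrArg (Int.cast : ℤ → ℝ) hsum
    have hdd : (x:ℝ) + y + z = (d:ℝ) + 1 := by
      have : (x + y + z : ℤ) = d + 1 := by omega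
      exact_mod_cast this
    field_simp
    linear_combination (d:ℝ) * hsR - (κ:ℝ) * hdd
  have hmem : toR p ∈ convexHull ℝ
      ({toR ![1, 0, 0], toR ![0, 1, 0], toR ![0, 0, 1], toR ![x, y, z]} :
        Set (Fin 3 → ℝ)) := by
    have hz4 : ∀ i ∈ (Finset.univ : Finset (Fin 4)), v4 i ∈
        ({toR ![1, 0, 0], toR ![0, 1, 0], toR ![0, 0, 1], toR ![x, y, z]} :
          Set (Fin 3 → ℝ)) := by
      intro i _; fin_cases i <;> simp [hv4_def]
    have := Finset.centerMass_mem_convexHull (Finset.univ : Finset (Fin 4)) hw0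
      (by rw [hws]; norm_num) hz4
    rw [Finset.centerMass_eq_of_sum_1 _ _ hws] at this
    convert this using 1
    funext j
    rw [Fin.sum_univ_four]
    fin_cases j <;>
      simp [toR, hp_def, hw_def, hv4_def, Pi.smul_apply, smul_eq_mul] <;>
      field_simp <;> ring
  rcases hfree p hmem with h | h | h | h
  · have e0 : a = 1 := by simpa [hp_def] using congrFun h 0
    have e1 : b = 0 := by simpa [hp_def] using congrFun h 1
    have e2 : c = 0 := by simpa [hp_def] using congrFun h 2
    omega
  · have e0 : a = 0 := by simpa [hp_def] using congrFun h 0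
    have e1 : b = 1 := by simpa [hp_def] using congrFun h 1
    have e2 : c = 0 := by simpa [hp_def] using congrFun h 2
    omega
  · have e0 : a = 0 := by simpa [hp_def] using congrFun h 0
    have e1 : b = 0 := by simpa [hp_def] using congrFun h 1
    have e2 : c = 1 := by simpa [hp_def] using congrFun h 2
    omega
  · have e0 : a = x := by simpa [hp_def] using congrFun h 0
    have e1 : b = y := by simpa [hp_def] using congrFun h 1
    have e2 : c = z := by simpa [hp_def] using congrFun h 2
    omega

lemma gcd_one_of_gap (X d : ℤ) (hd2 : 2 ≤ d)
    (hgap : ∀ κ : ℤ, 1 ≤ κ → κ ≤ d - 1 →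
      ⌈((κ * X : ℤ) : ℚ) / (d : ℚ)⌉ = ⌊((κ * X : ℤ) : ℚ) / (d : ℚ)⌋ + 1) :
    Int.gcd X d = 1 := by
  by_contra h
  have hg0 : 0 < Int.gcd X d := Int.gcd_pos_of_ne_zero_right X (by omega)
  have hg2n : 2 ≤ Int.gcd X d := by omega
  have hg2 : 2 ≤ (Int.gcd X d : ℤ) := by exact_mod_cast hg2n
  set g : ℤ := (Int.gcd X d : ℤ) with hg_def
  obtain ⟨x', hx'⟩ : g ∣ X := Int.gcd_dvd_left X d
  obtain ⟨κ, hκ⟩ : g ∣ d := Int.gcd_dvd_right X d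
  have hκ1 : 1 ≤ κ := by nlinarith
  have hκd : κ ≤ d - 1 := by nlinarith
  have heq : (κ * X : ℤ) = d * x' := by rw [hx', hκ]; ring
  have hdiv : ((κ * X : ℤ) : ℚ) / (d : ℚ) = (x' : ℚ) := by
    rw [heq]
    have hdQ : (d:ℚ) ≠ 0 := by exact_mod_cast (by omega : d ≠ 0)
    push_cast
    field_simp
  have := hgap κ hκ1 hκd
  rw [hdiv, Int.ceil_intCast, Int.floor_intCast] at this
  omega

theorem empty_tetrahedron_ceil_and_gcd
    (x y z : ℤ) (hx : 1 ≤ x) (hy : 1 ≤ y) (hz : 1 ≤ z)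
    (hfree : ∀ p : Fin 3 → ℤ,
      toR p ∈ convexHull ℝ
        ({toR ![1, 0, 0], toR ![0, 1, 0], toR ![0, 0, 1], toR ![x, y, z]} :
          Set (Fin 3 → ℝ)) →
      p = ![1, 0, 0] ∨ p = ![0, 1, 0] ∨ p = ![0, 0, 1] ∨ p = ![x, y, z])
    (d : ℤ) (hd : d = x + y + z - 1) :
    (∀ κ : ℤ, 1 ≤ κ → κ ≤ d - 1 →
      ⌈((κ * x : ℤ) : ℚ) / (d : ℚ)⌉ + ⌈((κ * y : ℤ) : ℚ) / (d : ℚ)⌉ +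
        ⌈((κ * z : ℤ) : ℚ) / (d : ℚ)⌉ = κ + 2) ∧
    Int.gcd x d = 1 ∧ Int.gcd y d = 1 ∧ Int.gcd z d = 1 := by
  have hd2 : (2:ℤ) ≤ d := by omega
  have hdQ : (d:ℚ) ≠ 0 := by exact_mod_cast (by omega : d ≠ 0)
  have key := key_lower x y z hx hy hz hfree d hd
  -- rewrite flipped ceilings as floors
  have flip : ∀ X κ : ℤ, ⌈(((d - κ) * X : ℤ) : ℚ) / (d : ℚ)⌉
      = X - ⌊((κ * X : ℤ) : ℚ) / (d : ℚ)⌋ := by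
    intro X κ
    have e : (((d - κ) * X : ℤ) : ℚ) / (d : ℚ) = -(((κ * X : ℤ) : ℚ) / (d : ℚ)) + (X : ℚ) := by
      push_cast; field_simp; ring
    rw [e, Int.ceil_add_intCast, Int.ceil_neg]
    ring
  have floor_sum : ∀ κ : ℤ, 1 ≤ κ → κ ≤ d - 1 →
      ⌊((κ * x : ℤ) : ℚ) / (d : ℚ)⌋ + ⌊((κ * y : ℤ) : ℚ) / (d : ℚ)⌋ +
        ⌊((κ * z : ℤ) : ℚ) / (d : ℚ)⌋ ≤ κ - 1 := by
    intro κ h1 h2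
    have := key (d - κ) (by omega) (by omega)
    rw [flip x κ, flip y κ, flip z κ] at this
    omega
  have ceil_eq : ∀ κ : ℤ, 1 ≤ κ → κ ≤ d - 1 →
      ⌈((κ * x : ℤ) : ℚ) / (d : ℚ)⌉ + ⌈((κ * y : ℤ) : ℚ) / (d : ℚ)⌉ +
        ⌈((κ * z : ℤ) : ℚ) / (d : ℚ)⌉ = κ + 2 := by
    intro κ h1 h2
    have hlo := key κ h1 h2
    have hf := floor_sum κ h1 h2
    have c1 := Int.ceil_le_floor_add_one (((κ * x : ℤ) : ℚ) / (d : ℚ))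
    have c2 := Int.ceil_le_floor_add_one (((κ * y : ℤ) : ℚ) / (d : ℚ))
    have c3 := Int.ceil_le_floor_add_one (((κ * z : ℤ) : ℚ) / (d : ℚ))
    omega
  refine ⟨ceil_eq, ?_, ?_, ?_⟩
  all_goals
    apply gcd_one_of_gap _ d hd2
    intro κ h1 h2
    have hlo := ceil_eq κ h1 h2
    have hf := floor_sum κ h1 h2
    have c1 := Int.ceil_le_floor_add_one (((κ * x : ℤ) : ℚ) / (d : ℚ))
    have c2 := Int.ceil_le_floor_add_one (((κ * y : ℤ) : ℚ) / (d : ℚ))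
    have c3 := Int.ceil_le_floor_add_one (((κ * z : ℤ) : ℚ) / (d : ℚ))
    have f1 := Int.floor_le_ceil (((κ * x : ℤ) : ℚ) / (d : ℚ))
    have f2 := Int.floor_le_ceil (((κ * y : ℤ) : ℚ) / (d : ℚ))
    have f3 := Int.floor_le_ceil (((κ * z : ℤ) : ℚ) / (d : ℚ))
    omega
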